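/- Fix integers m ≥ 1 and n ≥ 3, real constants c₁,…,c_m, indices i₁,…,i_m ∈ {3,…,n}, and signs j₁,…,j_m ∈ {0,1}. Let C_m = { Λ ∈ M₁([0,1]) : (−1)^{j_k} ∫_{[0,1]} r^{i_k − 2} Λ(dr) ≤ c_k for all k ∈ {1,…,m} }, and let C_D be the set of Λ ∈ C_m that are discrete with at most m + 1 atoms, i.e. Λ = Σ_{k=1}^p w_k δ_{x_k} with 1 ≤ p ≤ m+1, w_k ≥ 0, x_k ∈ [0,1] and Σ_{k=1}^p w_k = 1. Then for every Borel measurable q : [0,1] → ℝ that is bounded on at least one side, with F(ν) := ∫_{[0,1]} q dν (a value in the extended reals), one has inf_{ν ∈ C_m} F(ν) = inf_{ν ∈ C_D} F(ν) and sup_{ν ∈ C_m} F(ν) = sup_{ν ∈ C_D} F(ν). -/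

import Mathlib

open MeasureTheory

set_option maxHeartbeats 1000000

/-- The extended-real-valued integral of a real function `q` against a measure `μ`:
positive part minus negative part, computed with Lebesgue integrals.  For `q` bounded
on at least one side (and `μ` finite) this is the usual extended-real integral
`∫ q dμ ∈ [-∞, ∞]`. -/
noncomputable def eIntegral {α : Type*} [MeasurableSpace α]
    (q : α → ℝ) (μ : Measure α) : EReal :=
  ((∫⁻ x, ENNReal.ofReal (q x) ∂μ : ENNReal) : EReal)
    - ((∫⁻ x, ENNReal.ofReal (-(q x)) ∂μ : ENNReal) : EReal)


section Barycenter
universe u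
variable {α : Type*} [MeasurableSpace α]

theorem nonempty_of_prob {ν : Measure α} [IsProbabilityMeasure ν] : Nonempty α := by
  by_contra h
  rw [not_nonempty_iff] at h
  have h1 : ν Set.univ = 1 := measure_univ
  rw [Set.univ_eq_empty_iff.mpr h, measure_empty] at h1
  exact zero_ne_one h1

theorem barycenter_aux (d : ℕ) :
    ∀ {E : Type u} [inst1 : NormedAddCommGroup E] [inst2 : NormedSpace ℝ E]
      [inst3 : FiniteDimensional ℝ E], Module.finrank ℝ E ≤ d →
    ∀ (ν : Measure α) [IsProbabilityMeasure ν] (f : α → E), Integrable f ν →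
      ∫ x, f x ∂ν ∈ convexHull ℝ (Set.range f) := by
  induction d with
  | zero =>
    intro E _ _ _ hd ν _ f hfi
    have : Module.finrank ℝ E = 0 := Nat.le_zero.mp hd
    have hsub : Subsingleton E := Module.finrank_zero_iff.mp this
    obtain ⟨x₀⟩ := nonempty_of_prob (ν := ν)
    have : ∫ x, f x ∂ν = f x₀ := Subsingleton.elim _ _
    rw [this]
    exact subset_convexHull ℝ _ ⟨x₀, rfl⟩
  | succ n ih =>
    intro E _ _ _ hd ν _ f hfi
    rcases le_or_gt (Module.finrank ℝ E) n with hle | hgt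
    · exact ih hle ν f hfi
    have hrank : Module.finrank ℝ E = n + 1 := le_antisymm hd hgt
    set z := ∫ x, f x ∂ν with hz
    -- key reduction into a proper submodule
    have key : ∀ (V : Submodule ℝ E), Module.finrank ℝ V ≤ n →
        ∀ f' : α → E, (f' =ᵐ[ν] f) → Set.range f' ⊆ Set.range f → Integrable f' ν →
        (∀ x, f' x - z ∈ V) → z ∈ convexHull ℝ (Set.range f) := by
      intro V hV f' hae hsubr hfi' hmem
      set g : α → V := fun x => ⟨f' x - z, hmem x⟩ with hg
      have hfi'' : Integrable (fun x => f' x - z) ν := hfi'.sub (integrable_const z)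
      have haesm : AEStronglyMeasurable g ν := by
        rw [← Topology.IsEmbedding.aestronglyMeasurable_comp_iff
          (Topology.IsEmbedding.subtypeVal (p := fun y => y ∈ V))]
        exact hfi''.aestronglyMeasurable
      have hgint : Integrable g ν := by
        refine ⟨haesm, ?_⟩
        have h2 := hfi''.2
        exact h2
      have hgz : ∫ x, g x ∂ν = 0 := by
        have hcomm := (V.subtypeL).integral_comp_comm hgint
        have hval : (fun x => V.subtypeL (g x)) = fun x => f' x - z := rfl
        rw [hval] at hcomm
        have hintf' : ∫ x, f' x ∂ν = z := by
          rw [integral_congr_ae hae]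
        have : ∫ x, (f' x - z) ∂ν = 0 := by
          rw [integral_sub hfi' (integrable_const z), hintf', integral_const]
          simp
        rw [this] at hcomm
        exact Subtype.ext hcomm.symm
      have h0 : (0 : V) ∈ convexHull ℝ (Set.range g) := hgz ▸ ih hV ν g hgint
      have h0E : (0 : E) ∈ convexHull ℝ (Set.range fun x => f' x - z) := by
        have himg := V.subtype.image_convexHull (Set.range g)
        have : (0 : E) ∈ V.subtype '' (convexHull ℝ (Set.range g)) :=
          ⟨0, h0, rfl⟩
        rw [himg] at this
        have hrange : V.subtype '' Set.range g = Set.range fun x => f' x - z := by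
          ext y
          constructor
          · rintro ⟨v, ⟨x, rfl⟩, rfl⟩; exact ⟨x, rfl⟩
          · rintro ⟨x, rfl⟩; exact ⟨g x, ⟨x, rfl⟩, rfl⟩
        rwa [hrange] at this
      -- translate by z
      have := (AffineEquiv.constVAdd ℝ E z).toAffineMap.image_convexHull
        (Set.range fun x => f' x - z)
      have hzmem : z ∈ convexHull ℝ (Set.range f') := by
        have hmemi : z ∈ (AffineEquiv.constVAdd ℝ E z).toAffineMap ''
            (convexHull ℝ (Set.range fun x => f' x - z)) := by
          refine ⟨0, h0E, ?_⟩
          simp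
        rw [this] at hmemi
        have himg2 : (AffineEquiv.constVAdd ℝ E z).toAffineMap ''
            (Set.range fun x => f' x - z) = Set.range f' := by
          ext y
          simp only [Set.mem_image, Set.mem_range]
          constructor
          · rintro ⟨w, ⟨x, rfl⟩, rfl⟩
            exact ⟨x, by simp⟩
          · rintro ⟨x, rfl⟩
            exact ⟨f' x - z, ⟨x, rfl⟩, by simp⟩
        rwa [himg2] at hmemi
      exact convexHull_mono hsubr hzmem
    by_cases htop : affineSpan ℝ (Set.range f) = ⊤
    · set C := convexHull ℝ (Set.range f) with hC
      have hCconv : Convex ℝ C := convex_convexHull ℝ _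
      have hint : (interior C).Nonempty := by
        rw [hCconv.interior_nonempty_iff_affineSpan_eq_top, affineSpan_convexHull]
        exact htop
      by_cases hzint : z ∈ interior C
      · exact interior_subset hzint
      obtain ⟨φ, hφ⟩ := geometric_hahn_banach_open_point hCconv.interior isOpen_interior hzint
      obtain ⟨y0, hy0⟩ := hint
      have hφne : φ ≠ 0 := by
        intro h0
        have := hφ y0 hy0
        rw [h0] at this
        simp at this
      have hCle : ∀ y ∈ C, φ y ≤ φ z := by
        intro y hy
        have hseg : ∀ t : ℝ, t ∈ Set.Ioc (0:ℝ) 1 → φ (y + t • (y0 - y)) < φ z := fun t ht =>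
          hφ _ (hCconv.add_smul_sub_mem_interior hy hy0 ht)
        have hcont : Continuous fun t : ℝ => φ (y + t • (y0 - y)) := by
          exact φ.continuous.comp (by continuity)
        have htend : Filter.Tendsto (fun t : ℝ => φ (y + t • (y0 - y)))
            (nhdsWithin 0 (Set.Ioi 0)) (nhds (φ y)) := by
          have h1 := (hcont.tendsto 0).mono_left (nhdsWithin_le_nhds (s := Set.Ioi 0))
          simpa using h1
        refine le_of_tendsto htend ?_
        filter_upwards [Ioc_mem_nhdsGT_of_mem (Set.left_mem_Ico.mpr one_pos)] with t ht
          using (hseg t ht).le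
      have hzle : ∀ x, φ (f x) ≤ φ z := fun x => hCle _ (subset_convexHull ℝ _ ⟨x, rfl⟩)
      have hint_eq : ∫ x, φ (f x) ∂ν = φ z := φ.integral_comp_comm hfi
      have hae0 : (fun x => φ z - φ (f x)) =ᵐ[ν] 0 := by
        rw [← integral_eq_zero_iff_of_nonneg_ae]
        · rw [integral_sub (integrable_const _) (φ.integrable_comp hfi), hint_eq, integral_const]
          simp
        · exact Filter.Eventually.of_forall fun x => sub_nonneg.mpr (hzle x)
        · exact (integrable_const _).sub (φ.integrable_comp hfi)
      have haeS : ∀ᵐ x ∂ν, φ (f x) = φ z := by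
        filter_upwards [hae0] with x hx
        have : φ z - φ (f x) = 0 := hx
        linarith
      obtain ⟨x₁, hx₁⟩ : ∃ x, φ (f x) = φ z := by
        have : Filter.NeBot (ae ν) := ae_neBot.mpr (IsProbabilityMeasure.ne_zero ν)
        exact haeS.exists
      set f' : α → E := fun x => if φ (f x) = φ z then f x else f x₁ with hf'
      have hae' : f' =ᵐ[ν] f := by
        filter_upwards [haeS] with x hx
        simp [hf', hx]
      have hsubr : Set.range f' ⊆ Set.range f := by
        rintro y ⟨x, rfl⟩
        by_cases h : φ (f x) = φ z
        · exact ⟨x, by simp [hf', h]⟩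
        · exact ⟨x₁, by simp [hf', h]⟩
      have hfi' : Integrable f' ν := hfi.congr hae'.symm
      have hφf' : ∀ x, φ (f' x) = φ z := by
        intro x
        by_cases h : φ (f x) = φ z
        · simp [hf', h]
        · simp [hf', h, hx₁]
      have hker : ∀ x, f' x - z ∈ LinearMap.ker (φ : E →ₗ[ℝ] ℝ) := by
        intro x
        simp [LinearMap.mem_ker, map_sub, hφf' x]
      have hkerne : LinearMap.ker (φ : E →ₗ[ℝ] ℝ) ≠ ⊤ := by
        intro h
        apply hφne
        ext v
        have hv : v ∈ LinearMap.ker (φ : E →ₗ[ℝ] ℝ) := h ▸ Submodule.mem_top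
        simpa using hv
      have hkrank : Module.finrank ℝ (LinearMap.ker (φ : E →ₗ[ℝ] ℝ)) ≤ n := by
        have := Submodule.finrank_lt (K := ℝ) (V := E) hkerne
        omega
      exact key _ hkrank f' hae' hsubr hfi' hker
    · -- proper affine span
      have hzA : z ∈ affineSpan ℝ (Set.range f) := by
        refine (AffineSubspace.convex _).integral_mem
          (AffineSubspace.closed_of_finiteDimensional _) ?_ hfi
        exact Filter.Eventually.of_forall fun x => subset_affineSpan ℝ _ ⟨x, rfl⟩
      set V := (affineSpan ℝ (Set.range f)).direction with hV
      have hVne : V ≠ ⊤ := by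
        intro h
        apply htop
        rw [← AffineSubspace.direction_eq_top_iff_of_nonempty ⟨z, hzA⟩]
        exact h
      have hVrank : Module.finrank ℝ V ≤ n := by
        have := Submodule.finrank_lt (K := ℝ) (V := E) hVne
        omega
      refine key V hVrank f (Filter.EventuallyEq.refl _ _) subset_rfl hfi ?_
      intro x
      exact AffineSubspace.vsub_mem_direction (subset_affineSpan ℝ _ ⟨x, rfl⟩) hzA

theorem integral_mem_convexHull_range
    {E : Type*} [NormedAddCommGroup E] [NormedSpace ℝ E] [FiniteDimensional ℝ E]
    {α : Type*} [MeasurableSpace α] (ν : Measure α) [IsProbabilityMeasure ν]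
    (f : α → E) (hfi : Integrable f ν) :
    ∫ x, f x ∂ν ∈ convexHull ℝ (Set.range f) :=
  barycenter_aux (Module.finrank ℝ E) le_rfl ν f hfi


variable {α : Type*} [MeasurableSpace α] [MeasurableSingletonClass α]

theorem integrable_dirac' {f : α → ℝ} {x : α} : Integrable f (Measure.dirac x) := by
  have : f =ᵐ[Measure.dirac x] (fun _ => f x) := by
    rw [ae_dirac_eq]
    exact Filter.eventually_pure.mpr rfl
  exact (integrable_const (f x)).congr this.symm

theorem discrete_integrable {p : ℕ} (w : Fin p → ℝ) (x : Fin p → α) (f : α → ℝ) :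
    Integrable f (∑ k, (ENNReal.ofReal (w k)) • Measure.dirac (x k)) := by
  exact integrable_finset_sum_measure.mpr
    (fun k _ => integrable_dirac'.smul_measure ENNReal.ofReal_ne_top)

theorem discrete_integral {p : ℕ} (w : Fin p → ℝ) (hw : ∀ k, 0 ≤ w k) (x : Fin p → α)
    (f : α → ℝ) :
    ∫ y, f y ∂(∑ k, (ENNReal.ofReal (w k)) • Measure.dirac (x k)) = ∑ k, w k * f (x k) := by
  rw [integral_finset_sum_measure (fun k _ => integrable_dirac'.smul_measure ENNReal.ofReal_ne_top)]
  congr 1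
  ext k
  rw [integral_smul_measure, integral_dirac, ENNReal.toReal_ofReal (hw k)]
  simp [mul_comm]

theorem discrete_lintegral {p : ℕ} (w : Fin p → ℝ) (x : Fin p → α) (f : α → ENNReal) :
    ∫⁻ y, f y ∂(∑ k, (ENNReal.ofReal (w k)) • Measure.dirac (x k))
      = ∑ k, ENNReal.ofReal (w k) * f (x k) := by
  rw [lintegral_finset_sum_measure]
  congr 1
  ext k
  rw [lintegral_smul_measure, lintegral_dirac, smul_eq_mul]

theorem discrete_prob {p : ℕ} (w : Fin p → ℝ) (hw : ∀ k, 0 ≤ w k) (hw1 : ∑ k, w k = 1)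
    (x : Fin p → α) :
    IsProbabilityMeasure (∑ k, (ENNReal.ofReal (w k)) • Measure.dirac (x k)) := by
  constructor
  have : (∑ k, (ENNReal.ofReal (w k)) • Measure.dirac (x k)) Set.univ
      = ∑ k, ENNReal.ofReal (w k) := by
    rw [Measure.finset_sum_apply]
    congr 1
    ext k
    simp [Measure.smul_apply]
  rw [this, ← ENNReal.ofReal_sum_of_nonneg (fun k _ => hw k), hw1, ENNReal.ofReal_one]

theorem ofReal_max_zero (r : ℝ) : ENNReal.ofReal (max r 0) = ENNReal.ofReal r := by
  rcases le_or_gt 0 r with h | h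
  · rw [max_eq_left h]
  · rw [max_eq_right h.le, ENNReal.ofReal_zero, ENNReal.ofReal_of_nonpos h.le]


theorem discrete_eIntegral {p : ℕ} (w : Fin p → ℝ) (hw : ∀ k, 0 ≤ w k) (x : Fin p → α)
    (q : α → ℝ) :
    eIntegral q (∑ k, (ENNReal.ofReal (w k)) • Measure.dirac (x k))
      = ((∑ k, w k * q (x k) : ℝ) : EReal) := by
  unfold eIntegral
  rw [discrete_lintegral, discrete_lintegral]
  have hpos : ∑ k, ENNReal.ofReal (w k) * ENNReal.ofReal (q (x k))
      = ENNReal.ofReal (∑ k, w k * max (q (x k)) 0) := by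
    rw [ENNReal.ofReal_sum_of_nonneg (fun k _ => mul_nonneg (hw k) (le_max_right _ _))]
    congr 1; ext k
    rw [ENNReal.ofReal_mul (hw k), ofReal_max_zero]
  have hneg : ∑ k, ENNReal.ofReal (w k) * ENNReal.ofReal (-q (x k))
      = ENNReal.ofReal (∑ k, w k * max (-q (x k)) 0) := by
    rw [ENNReal.ofReal_sum_of_nonneg (fun k _ => mul_nonneg (hw k) (le_max_right _ _))]
    congr 1; ext k
    rw [ENNReal.ofReal_mul (hw k), ofReal_max_zero]
  rw [hpos, hneg, EReal.coe_ennreal_ofReal, EReal.coe_ennreal_ofReal]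
  rw [max_eq_left (Finset.sum_nonneg fun k _ => mul_nonneg (hw k) (le_max_right _ _)),
    max_eq_left (Finset.sum_nonneg fun k _ => mul_nonneg (hw k) (le_max_right _ _))]
  rw [← EReal.coe_sub]
  norm_cast
  rw [← Finset.sum_sub_distrib]
  congr 1; ext k
  rw [← mul_sub]
  congr 1
  rcases le_or_gt 0 (q (x k)) with h | h
  · rw [max_eq_left h, max_eq_right (by linarith), sub_zero]
  · rw [max_eq_right h.le, max_eq_left (by linarith), zero_sub, neg_neg]

theorem eIntegral_eq_integral {μ : Measure α} {q : α → ℝ} (hq : Integrable q μ) :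
    eIntegral q μ = ((∫ y, q y ∂μ : ℝ) : EReal) := by
  have hA : (∫⁻ y, ENNReal.ofReal (q y) ∂μ) ≠ ⊤ := by
    refine (lt_of_le_of_lt (lintegral_mono fun y => ?_) hq.2).ne
    exact Real.ofReal_le_enorm (q y)
  have hB : (∫⁻ y, ENNReal.ofReal (-q y) ∂μ) ≠ ⊤ := by
    refine (lt_of_le_of_lt (lintegral_mono fun y => ?_) hq.neg.2).ne
    exact Real.ofReal_le_enorm (-q y)
  unfold eIntegral
  rw [integral_eq_lintegral_pos_part_sub_lintegral_neg_part hq]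
  rw [EReal.coe_sub]
  congr 1
  · rw [← EReal.coe_toReal (x := ((∫⁻ y, ENNReal.ofReal (q y) ∂μ : ENNReal) : EReal))
      (by simpa using hA) (EReal.coe_ennreal_ne_bot _), EReal.toReal_coe_ennreal]
  · rw [← EReal.coe_toReal (x := ((∫⁻ y, ENNReal.ofReal (-q y) ∂μ : ENNReal) : EReal))
      (by simpa using hB) (EReal.coe_ennreal_ne_bot _), EReal.toReal_coe_ennreal]

set_option maxHeartbeats 1000000

theorem reduce_atom_core {m : ℕ} (V : Fin (m+2) → Fin m → ℝ) (G : Fin (m+2) → ℝ)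
    (w : Fin (m+2) → ℝ) (hw : ∀ k, 0 ≤ w k)
    (lam : Fin (m+2) → ℝ) (hlV : ∀ l, ∑ k, lam k * V k l = 0)
    (hl1 : ∑ k, lam k = 0) (hlG : ∑ k, lam k * G k ≤ 0) (hlneg : ∃ k, lam k < 0) :
    ∃ w' : Fin (m+2) → ℝ, (∀ k, 0 ≤ w' k) ∧ (∑ k, w' k = ∑ k, w k) ∧
      (∀ l, ∑ k, w' k * V k l = ∑ k, w k * V k l) ∧
      (∑ k, w' k * G k ≤ ∑ k, w k * G k) ∧ ∃ k0, w' k0 = 0 := by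
  classical
  set K : Finset (Fin (m+2)) := Finset.univ.filter (fun k => lam k < 0) with hK
  have hKne : K.Nonempty := by
    obtain ⟨k, hk⟩ := hlneg
    exact ⟨k, by simp [hK, hk]⟩
  obtain ⟨k0, hk0K, hk0min⟩ := K.exists_min_image (fun k => w k / (-lam k)) hKne
  have hk0neg : lam k0 < 0 := by simpa [hK] using hk0K
  set t : ℝ := w k0 / (-lam k0) with ht
  have ht0 : 0 ≤ t := div_nonneg (hw k0) (by linarith)
  refine ⟨fun k => w k + t * lam k, ?_, ?_, ?_, ?_, ⟨k0, ?_⟩⟩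
  · intro k
    show 0 ≤ w k + t * lam k
    rcases le_or_gt 0 (lam k) with h | h
    · have h2 : 0 ≤ t * lam k := mul_nonneg ht0 h
      linarith [hw k]
    · have hkK : k ∈ K := by simp [hK, h]
      have hmin : t ≤ w k / (-lam k) := hk0min k hkK
      have hpos : 0 < -lam k := by linarith
      have h3 : t * (-lam k) ≤ w k := by
        rw [← le_div_iff₀ hpos]
        exact hmin
      nlinarith
  · show ∑ k, (w k + t * lam k) = ∑ k, w k
    rw [Finset.sum_add_distrib, ← Finset.mul_sum, hl1, mul_zero, add_zero]
  · intro l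
    show ∑ k, (w k + t * lam k) * V k l = ∑ k, w k * V k l
    have h4 : ∑ k, (w k + t * lam k) * V k l
        = ∑ k, w k * V k l + t * ∑ k, lam k * V k l := by
      rw [Finset.mul_sum, ← Finset.sum_add_distrib]
      exact Finset.sum_congr rfl fun k _ => by ring
    rw [h4, hlV l, mul_zero, add_zero]
  · show ∑ k, (w k + t * lam k) * G k ≤ ∑ k, w k * G k
    have h4 : ∑ k, (w k + t * lam k) * G k
        = ∑ k, w k * G k + t * ∑ k, lam k * G k := by
      rw [Finset.mul_sum, ← Finset.sum_add_distrib]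
      exact Finset.sum_congr rfl fun k _ => by ring
    rw [h4]
    nlinarith
  · show w k0 + t * lam k0 = 0
    have hlk0 : lam k0 ≠ 0 := ne_of_lt hk0neg
    rw [ht]
    field_simp
    ring



notation "I01" => Set.Icc (0:ℝ) 1

theorem caratheodory_rep {m : ℕ} (a : Fin m → ℕ)
    (ν : Measure I01) [IsProbabilityMeasure ν]
    (g : ↥I01 → ℝ) (hgi : Integrable g ν) :
    ∃ (p : ℕ) (w : Fin p → ℝ) (x : Fin p → I01),
      1 ≤ p ∧ p ≤ m + 2 ∧ (∀ k, 0 ≤ w k) ∧ (∑ k, w k = 1) ∧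
      (∀ l : Fin m, ∑ k, w k * ((x k : ℝ)) ^ (a l) = ∫ r : I01, ((r:ℝ)) ^ (a l) ∂ν) ∧
      (∑ k, w k * g (x k) = ∫ y, g y ∂ν) := by
  classical
  set Φ : ↥I01 → Fin m → ℝ := fun y => fun l => ((y : ℝ)) ^ (a l) with hΦ
  set Ψ : ↥I01 → ((Fin m → ℝ) × ℝ) := fun y => (Φ y, g y) with hΨ
  have hΦc : Continuous Φ := by
    apply continuous_pi
    intro l
    exact (continuous_subtype_val.pow _)
  have hΦi : Integrable Φ ν := by
    refine ⟨hΦc.aestronglyMeasurable, ?_⟩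
    refine HasFiniteIntegral.of_bounded (C := 1) (Filter.Eventually.of_forall fun y => ?_)
    rw [pi_norm_le_iff_of_nonneg zero_le_one]
    intro l
    rw [Real.norm_eq_abs, abs_pow, abs_of_nonneg y.2.1]
    exact pow_le_one₀ y.2.1 y.2.2
  have hΨi : Integrable Ψ ν := hΦi.prodMk hgi
  have hmem := integral_mem_convexHull_range ν Ψ hΨi
  have hzval : ∫ y, Ψ y ∂ν = (∫ y, Φ y ∂ν, ∫ y, g y ∂ν) := integral_pair hΦi hgi
  set z : ((Fin m → ℝ) × ℝ) := ∫ y, Ψ y ∂ν with hz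
  rw [convexHull_eq_union] at hmem
  obtain ⟨t, hts, hai, hzt⟩ := by
    simpa only [Set.mem_iUnion] using hmem
  have hcard : t.card ≤ m + 2 := by
    have h1 := hai.card_le_finrank_succ
    rw [Fintype.card_coe] at h1
    have h2 : Module.finrank ℝ ((Fin m → ℝ) × ℝ) = m + 1 := by
      rw [Module.finrank_prod, Module.finrank_fintype_fun_eq_card, Module.finrank_self,
        Fintype.card_fin]
    have h3 := le_trans h1 (Nat.add_le_add_right (Submodule.finrank_le _) 1)
    rw [h2] at h3
    omega
  rw [Finset.convexHull_eq] at hzt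
  obtain ⟨wt, hwt0, hwt1, hwtz⟩ := hzt
  rw [Finset.centerMass_eq_of_sum_1 _ _ hwt1] at hwtz
  simp only [id] at hwtz
  have hpne : t.Nonempty := by
    rcases Finset.eq_empty_or_nonempty t with h | h
    · rw [h] at hwt1; simp at hwt1
    · exact h
  set e := t.equivFin with he
  set X : Fin t.card → ↥I01 := fun k => Classical.choose (hts (e.symm k).2) with hX
  have hXval : ∀ k, Ψ (X k) = ((e.symm k : ((Fin m → ℝ) × ℝ))) := fun k =>
    Classical.choose_spec (hts (e.symm k).2)
  set W : Fin t.card → ℝ := fun k => wt (e.symm k) with hW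
  have hW0 : ∀ k, 0 ≤ W k := fun k => hwt0 _ (e.symm k).2
  have hsum_eq : ∀ (F : ((Fin m → ℝ) × ℝ) → ℝ), ∑ k, W k * F (Ψ (X k)) = ∑ y ∈ t, wt y * F y := by
    intro F
    calc ∑ k, W k * F (Ψ (X k))
        = ∑ y : ↥t, wt ↑y * F ↑y :=
          Fintype.sum_equiv e.symm _ _ (fun k => by rw [hW, hXval k])
      _ = ∑ y ∈ t, wt y * F y := Finset.sum_coe_sort t (fun y => wt y * F y)
  have hW1 : ∑ k, W k = 1 := by
    have := hsum_eq (fun _ => 1)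
    simpa [hwt1] using this
  -- vector sum identity
  have hvec : ∑ k, W k • Ψ (X k) = z := by
    rw [← hwtz]
    calc ∑ k, W k • Ψ (X k)
        = ∑ y : ↥t, wt ↑y • (y : ((Fin m → ℝ) × ℝ)) :=
          Fintype.sum_equiv e.symm _ _ (fun k => by rw [hW, hXval k])
      _ = ∑ y ∈ t, wt y • y := Finset.sum_coe_sort t (fun y => wt y • y)
  have hmom : ∀ l : Fin m, ∑ k, W k * ((X k : ℝ)) ^ (a l) = ∫ r : I01, ((r:ℝ)) ^ (a l) ∂ν := by
    intro l
    have h1 := congrArg (fun v : ((Fin m → ℝ) × ℝ) => v.1 l) hvec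
    simp only [Prod.fst_sum, Finset.sum_apply, Prod.smul_fst, Pi.smul_apply,
      smul_eq_mul] at h1
    rw [hzval] at h1
    have h2 : (∫ y, Φ y ∂ν) l = ∫ y, Φ y l ∂ν := by
      have h3 := (ContinuousLinearMap.proj (R := ℝ) (φ := fun _ : Fin m => ℝ) l).integral_comp_comm hΦi
      simpa using h3.symm
    have h4 : ∑ x, W x * Φ (X x) l = (∫ y, Φ y ∂ν) l := h1
    rw [h2] at h4
    simpa [hΦ] using h4
  have hval : ∑ k, W k * g (X k) = ∫ y, g y ∂ν := by
    have h1 := congrArg (fun v : ((Fin m → ℝ) × ℝ) => v.2) hvec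
    simp only [Prod.snd_sum, Prod.smul_snd, smul_eq_mul] at h1
    rw [hzval] at h1
    simpa using h1
  exact ⟨t.card, W, X, hpne.card_pos, hcard, hW0, hW1, hmom, hval⟩

theorem exists_discrete_min {m : ℕ} (a : Fin m → ℕ)
    (ν : Measure I01) [IsProbabilityMeasure ν]
    (g : ↥I01 → ℝ) (hgi : Integrable g ν) :
    ∃ (p : ℕ) (w : Fin p → ℝ) (x : Fin p → I01),
      1 ≤ p ∧ p ≤ m + 1 ∧ (∀ k, 0 ≤ w k) ∧ (∑ k, w k = 1) ∧
      (∀ l : Fin m, ∑ k, w k * ((x k : ℝ)) ^ (a l) = ∫ r : I01, ((r:ℝ)) ^ (a l) ∂ν) ∧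
      (∑ k, w k * g (x k) ≤ ∫ y, g y ∂ν) := by
  classical
  obtain ⟨p, w, x, hp1, hp2, hw0, hw1, hmom, hval⟩ := caratheodory_rep a ν g hgi
  rcases le_or_gt p (m+1) with h | h
  · exact ⟨p, w, x, hp1, h, hw0, hw1, hmom, le_of_eq hval⟩
  have hpm : p = m + 2 := by omega
  subst hpm
  set u : Fin (m+2) → ((Fin m → ℝ) × ℝ) := fun k => (fun l => ((x k : ℝ)) ^ (a l), 1) with hu
  have hdep : ¬ LinearIndependent ℝ u := by
    intro hind
    have hc := hind.fintype_card_le_finrank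
    rw [Fintype.card_fin] at hc
    have h2 : Module.finrank ℝ ((Fin m → ℝ) × ℝ) = m + 1 := by
      rw [Module.finrank_prod, Module.finrank_fintype_fun_eq_card, Module.finrank_self,
        Fintype.card_fin]
    omega
  obtain ⟨lam, hlsum, k1, hk1⟩ := Fintype.not_linearIndependent_iff.mp hdep
  have hl1 : ∑ k, lam k = 0 := by
    have h3 := congrArg Prod.snd hlsum
    rw [Prod.snd_sum] at h3
    simpa [hu] using h3
  have hlV : ∀ l, ∑ k, lam k * ((x k : ℝ)) ^ (a l) = 0 := by
    intro l
    have h3 := congrArg (fun v : ((Fin m → ℝ) × ℝ) => v.1 l) hlsum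
    simp only [Prod.fst_sum, Finset.sum_apply, Prod.smul_fst, Pi.smul_apply,
      smul_eq_mul] at h3
    simpa [hu] using h3
  have hneg : ∀ (μ : Fin (m+2) → ℝ), (∑ k, μ k = 0) → μ k1 ≠ 0 → ∃ k, μ k < 0 := by
    intro μ hs hnz
    by_contra hcon
    push_neg at hcon
    have h5 := (Finset.sum_eq_zero_iff_of_nonneg (fun k _ => hcon k)).mp hs
    exact hnz (h5 k1 (Finset.mem_univ _))
  -- choose the sign of lam so that the value sum is ≤ 0
  obtain ⟨lam', hlV', hl1', hlG', hlneg'⟩ :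
      ∃ lam' : Fin (m+2) → ℝ, (∀ l, ∑ k, lam' k * ((x k : ℝ)) ^ (a l) = 0) ∧
        (∑ k, lam' k = 0) ∧ (∑ k, lam' k * g (x k) ≤ 0) ∧ (∃ k, lam' k < 0) := by
    rcases le_or_gt (∑ k, lam k * g (x k)) 0 with hG | hG
    · exact ⟨lam, hlV, hl1, hG, hneg lam hl1 hk1⟩
    · have hsneg : ∑ k, -lam k = -∑ k, lam k := by
        rw [← Finset.sum_neg_distrib]
      refine ⟨fun k => -lam k, ?_, ?_, ?_, ?_⟩
      · intro l
        have h7 : ∑ k, -lam k * ((x k : ℝ)) ^ (a l)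
            = -∑ k, lam k * ((x k : ℝ)) ^ (a l) := by
          rw [← Finset.sum_neg_distrib]
          exact Finset.sum_congr rfl fun k _ => by ring
        rw [h7, hlV l, neg_zero]
      · rw [hsneg, hl1, neg_zero]
      · have h7 : ∑ k, -lam k * g (x k) = -∑ k, lam k * g (x k) := by
          rw [← Finset.sum_neg_distrib]
          exact Finset.sum_congr rfl fun k _ => by ring
        rw [h7]
        linarith
      · refine hneg _ ?_ (by simpa using hk1)
        rw [hsneg, hl1, neg_zero]
  obtain ⟨w', hw'0, hw'sum, hw'V, hw'G, k0, hk0⟩ :=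
    reduce_atom_core (fun k l => ((x k : ℝ)) ^ (a l)) (fun k => g (x k)) w hw0
      lam' hlV' hl1' hlG' hlneg'
  rw [hw1] at hw'sum
  refine ⟨m + 1, fun j => w' (k0.succAbove j), fun j => x (k0.succAbove j),
    by omega, le_refl _, fun j => hw'0 _, ?_, ?_, ?_⟩
  · have h6 := Fin.sum_univ_succAbove w' k0
    rw [hk0, zero_add] at h6
    rw [← h6, hw'sum]
  · intro l
    have h6 := Fin.sum_univ_succAbove (fun k => w' k * ((x k : ℝ)) ^ (a l)) k0
    rw [hk0, zero_mul, zero_add] at h6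
    rw [← h6, hw'V l, hmom l]
  · have h6 := Fin.sum_univ_succAbove (fun k => w' k * g (x k)) k0
    rw [hk0, zero_mul, zero_add] at h6
    rw [← h6, ← hval]
    exact hw'G

theorem exists_discrete_lt {m : ℕ} (a : Fin m → ℕ)
    (ν : Measure I01) [IsProbabilityMeasure ν]
    (q : ↥I01 → ℝ) (hq : Measurable q)
    (hbd : (∃ b, ∀ x, b ≤ q x) ∨ (∃ b, ∀ x, q x ≤ b))
    (t : ℝ) (hlt : eIntegral q ν < (t : EReal)) :
    ∃ (p : ℕ) (w : Fin p → ℝ) (x : Fin p → I01),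
      1 ≤ p ∧ p ≤ m + 1 ∧ (∀ k, 0 ≤ w k) ∧ (∑ k, w k = 1) ∧
      (∀ l : Fin m, ∑ k, w k * ((x k : ℝ)) ^ (a l) = ∫ r : I01, ((r:ℝ)) ^ (a l) ∂ν) ∧
      eIntegral q (∑ k, (ENNReal.ofReal (w k)) • Measure.dirac (x k)) < (t : EReal) := by
  obtain ⟨g, hgi, hqg, hgt⟩ : ∃ g : ↥I01 → ℝ, Integrable g ν ∧ (∀ y, q y ≤ g y) ∧
      ∫ y, g y ∂ν < t := by
    have bound : ∀ (h : ↥I01 → ℝ) (c : ℝ), (∀ y, h y ≤ c) →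
        (∫⁻ y, ENNReal.ofReal (h y) ∂ν) ≠ ⊤ := by
      intro h c hc
      have h1 : (∫⁻ y, ENNReal.ofReal (h y) ∂ν) ≤ ENNReal.ofReal c := by
        calc (∫⁻ y, ENNReal.ofReal (h y) ∂ν) ≤ ∫⁻ _, ENNReal.ofReal c ∂ν :=
            lintegral_mono fun y => ENNReal.ofReal_le_ofReal (hc y)
          _ = ENNReal.ofReal c := by rw [lintegral_const, measure_univ, mul_one]
      exact (lt_of_le_of_lt h1 ENNReal.ofReal_lt_top).ne
    have hAtop : (∫⁻ y, ENNReal.ofReal (q y) ∂ν) ≠ ⊤ := by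
      rcases hbd with ⟨b, hb⟩ | ⟨b, hb⟩
      · intro hA'
        have hBfin : (∫⁻ y, ENNReal.ofReal (-(q y)) ∂ν) ≠ ⊤ :=
          bound _ (-b) (fun y => by linarith [hb y])
        have htopeq : eIntegral q ν = ⊤ := by
          unfold eIntegral
          rw [hA', EReal.coe_ennreal_top, sub_eq_add_neg, EReal.top_add_of_ne_bot]
          rw [ne_eq, EReal.neg_eq_bot_iff, EReal.coe_ennreal_eq_top_iff]
          exact hBfin
        rw [htopeq] at hlt
        exact not_top_lt hlt
      · exact bound _ b hb
    rcases eq_or_ne (∫⁻ y, ENNReal.ofReal (-(q y)) ∂ν) ⊤ with hBtop | hBfin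
    · -- truncation case
      obtain ⟨b, hb⟩ : ∃ b, ∀ x, q x ≤ b := by
        rcases hbd with ⟨b, hb⟩ | h
        · exact absurd hBtop (bound _ (-b) (fun y => by linarith [hb y]))
        · exact h
      have hgNi : ∀ N : ℕ, Integrable (fun y => max (q y) (-(N:ℝ))) ν := by
        intro N
        refine ⟨(hq.max measurable_const).aestronglyMeasurable,
          HasFiniteIntegral.of_bounded (C := |b| + N)
            (Filter.Eventually.of_forall fun y => ?_)⟩
        rw [Real.norm_eq_abs, abs_le]
        constructor
        · have h1 : -(N:ℝ) ≤ max (q y) (-(N:ℝ)) := le_max_right _ _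
          have h2 : (0:ℝ) ≤ |b| := abs_nonneg b
          linarith
        · refine max_le ?_ ?_
          · have := hb y
            have h2 : b ≤ |b| := le_abs_self b
            have h3 : (0:ℝ) ≤ N := Nat.cast_nonneg N
            linarith
          · have h2 : (0:ℝ) ≤ |b| := abs_nonneg b
            linarith
      have hposN : ∀ N : ℕ, (∫⁻ y, ENNReal.ofReal (max (q y) (-(N:ℝ))) ∂ν)
          = ∫⁻ y, ENNReal.ofReal (q y) ∂ν := by
        intro N
        apply lintegral_congr
        intro y
        rcases le_total (-(N:ℝ)) (q y) with h | h
        · rw [max_eq_left h]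
        · rw [max_eq_right h, ENNReal.ofReal_of_nonpos (neg_nonpos.mpr (Nat.cast_nonneg N)),
            ENNReal.ofReal_of_nonpos (by
              have h9 : -(N:ℝ) ≤ 0 := neg_nonpos.mpr (Nat.cast_nonneg N)
              linarith)]
      have hnegNpt : ∀ (N : ℕ) (y : ↥I01), ENNReal.ofReal (-(max (q y) (-(N:ℝ))))
          = min (ENNReal.ofReal (-(q y))) (N : ENNReal) := by
        intro N y
        rcases le_total (-(N:ℝ)) (q y) with h | h
        · rw [max_eq_left h]
          rw [min_eq_left]
          rw [← ENNReal.ofReal_natCast N]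
          exact ENNReal.ofReal_le_ofReal (by linarith)
        · rw [max_eq_right h, min_eq_right]
          · rw [neg_neg, ENNReal.ofReal_natCast]
          · rw [← ENNReal.ofReal_natCast N]
            exact ENNReal.ofReal_le_ofReal (by linarith)
      have hsup : (⨆ N : ℕ, ∫⁻ y, min (ENNReal.ofReal (-(q y))) (N : ENNReal) ∂ν)
          = ∫⁻ y, ENNReal.ofReal (-(q y)) ∂ν := by
        rw [← lintegral_iSup (f := fun N y => min (ENNReal.ofReal (-(q y))) (N : ENNReal)) (fun N => (hq.neg.ennreal_ofReal).min measurable_const)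
          (fun N M hNM y => min_le_min (le_refl _) (by exact_mod_cast Nat.cast_le.mpr hNM))]
        apply lintegral_congr
        intro y
        calc (⨆ N : ℕ, min (ENNReal.ofReal (-(q y))) (N : ENNReal))
            = ENNReal.ofReal (-(q y)) ⊓ ⨆ N : ℕ, (N : ENNReal) := (inf_iSup_eq _ _).symm
          _ = ENNReal.ofReal (-(q y)) := by rw [ENNReal.iSup_natCast, inf_top_eq]
      obtain ⟨N, hN⟩ : ∃ N : ℕ, ENNReal.ofReal ((∫⁻ y, ENNReal.ofReal (q y) ∂ν).toReal - t)
          < ∫⁻ y, min (ENNReal.ofReal (-(q y))) (N : ENNReal) ∂ν := by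
        rw [← lt_iSup_iff, hsup, hBtop]
        exact ENNReal.ofReal_lt_top
      refine ⟨fun y => max (q y) (-(N:ℝ)), hgNi N, fun y => le_max_left _ _, ?_⟩
      have hBNfin : (∫⁻ y, min (ENNReal.ofReal (-(q y))) (N : ENNReal) ∂ν) ≠ ⊤ := by
        refine (lt_of_le_of_lt (le_trans (lintegral_mono fun y => min_le_right _ _)
          (le_of_eq (by rw [lintegral_const, measure_univ, mul_one]))) ?_).ne
        exact ENNReal.natCast_lt_top N
      have hint : ∫ y, max (q y) (-(N:ℝ)) ∂ν
          = (∫⁻ y, ENNReal.ofReal (q y) ∂ν).toReal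
            - (∫⁻ y, min (ENNReal.ofReal (-(q y))) (N : ENNReal) ∂ν).toReal := by
        rw [integral_eq_lintegral_pos_part_sub_lintegral_neg_part (hgNi N)]
        congr 1
        · rw [hposN N]
        · congr 1
          exact lintegral_congr (hnegNpt N)
      rw [hint]
      rcases le_or_gt 0 ((∫⁻ y, ENNReal.ofReal (q y) ∂ν).toReal - t) with hc | hc
      · have := (ENNReal.ofReal_lt_iff_lt_toReal hc hBNfin).mp hN
        linarith
      · have h0 : 0 ≤ (∫⁻ y, min (ENNReal.ofReal (-(q y))) (N : ENNReal) ∂ν).toReal :=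
          ENNReal.toReal_nonneg
        linarith
    · -- integrable case
      have hqi : Integrable q ν := by
        refine ⟨hq.aestronglyMeasurable, ?_⟩
        have hpt : ∀ y : ↥I01, (‖q y‖₊ : ENNReal)
            = ENNReal.ofReal (q y) + ENNReal.ofReal (-(q y)) := by
          intro y
          rw [← enorm_eq_nnnorm, Real.enorm_eq_ofReal_abs]
          rcases le_total 0 (q y) with h | h
          · rw [abs_of_nonneg h, ENNReal.ofReal_of_nonpos (neg_nonpos.mpr h), add_zero]
          · rw [abs_of_nonpos h, ENNReal.ofReal_of_nonpos h, zero_add]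
        have : (∫⁻ y, (‖q y‖₊ : ENNReal) ∂ν)
            = (∫⁻ y, ENNReal.ofReal (q y) ∂ν) + ∫⁻ y, ENNReal.ofReal (-(q y)) ∂ν := by
          rw [← lintegral_add_left hq.ennreal_ofReal]
          exact lintegral_congr hpt
        show (∫⁻ y, (‖q y‖₊ : ENNReal) ∂ν) < ⊤
        rw [this]
        exact ENNReal.add_lt_top.mpr ⟨hAtop.lt_top, hBfin.lt_top⟩
      refine ⟨q, hqi, fun y => le_refl _, ?_⟩
      have heq := eIntegral_eq_integral hqi
      rw [heq] at hlt
      exact EReal.coe_lt_coe_iff.mp hlt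
  obtain ⟨p, w, x, hp1, hp2, hw0, hw1, hmom, hval⟩ := exists_discrete_min a ν g hgi
  refine ⟨p, w, x, hp1, hp2, hw0, hw1, hmom, ?_⟩
  rw [discrete_eIntegral w hw0 x q]
  have hle : ∑ k, w k * q (x k) ≤ ∑ k, w k * g (x k) :=
    Finset.sum_le_sum fun k _ => mul_le_mul_of_nonneg_left (hqg _) (hw0 k)
  exact EReal.coe_lt_coe_iff.mpr (lt_of_le_of_lt hle (lt_of_le_of_lt hval hgt))

theorem lintegral_ofReal_ne_top_of_bounded {μ : Measure I01} [IsProbabilityMeasure μ]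
    {h : ↥I01 → ℝ} {c : ℝ} (hc : ∀ y, h y ≤ c) :
    (∫⁻ y, ENNReal.ofReal (h y) ∂μ) ≠ ⊤ := by
  have h1 : (∫⁻ y, ENNReal.ofReal (h y) ∂μ) ≤ ENNReal.ofReal c := by
    calc (∫⁻ y, ENNReal.ofReal (h y) ∂μ) ≤ ∫⁻ _, ENNReal.ofReal c ∂μ :=
        lintegral_mono fun y => ENNReal.ofReal_le_ofReal (hc y)
      _ = ENNReal.ofReal c := by rw [lintegral_const, measure_univ, mul_one]
  exact (lt_of_le_of_lt h1 ENNReal.ofReal_lt_top).ne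

theorem coe_ennreal_fin (A : ENNReal) (hA : A ≠ ⊤) :
    ((A : EReal)) = ((A.toReal : ℝ) : EReal) := by
  rw [← EReal.coe_toReal (x := (A : EReal)) (by simpa using hA) (EReal.coe_ennreal_ne_bot A),
    EReal.toReal_coe_ennreal]

theorem ereal_sub_swap (A B : ENNReal) (h : A ≠ ⊤ ∨ B ≠ ⊤) :
    (B : EReal) - (A : EReal) = -((A : EReal) - (B : EReal)) := by
  rcases eq_or_ne A ⊤ with hA | hA
  · have hB : B ≠ ⊤ := by tauto
    rw [hA, EReal.coe_ennreal_top, EReal.sub_top, sub_eq_add_neg,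
      EReal.top_add_of_ne_bot (by
        rw [ne_eq, EReal.neg_eq_bot_iff, EReal.coe_ennreal_eq_top_iff]
        exact hB)]
    rfl
  · rcases eq_or_ne B ⊤ with hB | hB
    · rw [hB, EReal.coe_ennreal_top, EReal.sub_top, sub_eq_add_neg,
        EReal.top_add_of_ne_bot (by
          rw [ne_eq, EReal.neg_eq_bot_iff, EReal.coe_ennreal_eq_top_iff]
          exact hA)]
      rfl
    · rw [coe_ennreal_fin A hA, coe_ennreal_fin B hB, ← EReal.coe_sub, ← EReal.coe_sub,
        ← EReal.coe_neg, EReal.coe_eq_coe_iff]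
      ring

theorem eIntegral_neg {μ : Measure I01} [IsProbabilityMeasure μ] (q : ↥I01 → ℝ)
    (hbd : (∃ b, ∀ x, b ≤ q x) ∨ (∃ b, ∀ x, q x ≤ b)) :
    eIntegral (fun y => -(q y)) μ = - eIntegral q μ := by
  have hswap : (∫⁻ y, ENNReal.ofReal (-(-(q y))) ∂μ) = ∫⁻ y, ENNReal.ofReal (q y) ∂μ :=
    lintegral_congr fun y => by rw [neg_neg]
  unfold eIntegral
  rw [hswap]
  apply ereal_sub_swap
  rcases hbd with ⟨b, hb⟩ | ⟨b, hb⟩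
  · right
    exact lintegral_ofReal_ne_top_of_bounded (c := -b) (fun y => by linarith [hb y])
  · left
    exact lintegral_ofReal_ne_top_of_bounded hb

theorem extrema_on_moment_constraints_attained_on_discrete
    (m n : ℕ) (hm : 1 ≤ m) (hn : 3 ≤ n)
    (c : Fin m → ℝ) (i : Fin m → ℕ) (hi : ∀ k, 3 ≤ i k ∧ i k ≤ n)
    (j : Fin m → ℕ) (hj : ∀ k, j k ≤ 1)
    (Cm CD : Set (Measure (Set.Icc (0:ℝ) 1)))
    (hCm : Cm = {Λ | IsProbabilityMeasure Λ ∧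
      ∀ k : Fin m, (-1 : ℝ) ^ (j k) * ∫ r : Set.Icc (0:ℝ) 1, ((r : ℝ)) ^ (i k - 2) ∂Λ ≤ c k})
    (hCD : CD = {Λ ∈ Cm | ∃ p : ℕ, 1 ≤ p ∧ p ≤ m + 1 ∧
      ∃ w : Fin p → ℝ, ∃ x : Fin p → Set.Icc (0:ℝ) 1,
        (∀ k, 0 ≤ w k) ∧ (∑ k, w k = 1) ∧
        Λ = ∑ k, (ENNReal.ofReal (w k)) • Measure.dirac (x k)})
    (q : Set.Icc (0:ℝ) 1 → ℝ) (hq : Measurable q)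
    (hbd : (∃ b, ∀ x, b ≤ q x) ∨ (∃ b, ∀ x, q x ≤ b)) :
    (⨅ ν ∈ Cm, eIntegral q ν) = (⨅ ν ∈ CD, eIntegral q ν) ∧
    (⨆ ν ∈ Cm, eIntegral q ν) = (⨆ ν ∈ CD, eIntegral q ν) := by
  have hCDsub : CD ⊆ Cm := by
    rw [hCD]
    exact Set.sep_subset _ _
  have key : ∀ (q' : ↥I01 → ℝ), Measurable q' →
      ((∃ b, ∀ x, b ≤ q' x) ∨ (∃ b, ∀ x, q' x ≤ b)) →
      ∀ ν ∈ Cm, ∀ t : ℝ, eIntegral q' ν < (t : EReal) →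
      ∃ μ ∈ CD, eIntegral q' μ < (t : EReal) := by
    intro q' hq' hbd' ν hν t hlt
    have hν' := hν
    rw [hCm] at hν'
    obtain ⟨hprob, hcons⟩ := hν'
    obtain ⟨p, w, x, hp1, hp2, hw0, hw1, hmom, hlt'⟩ :=
      exists_discrete_lt (fun k => i k - 2) ν q' hq' hbd' t hlt
    refine ⟨_, ?_, hlt'⟩
    rw [hCD]
    refine ⟨?_, p, hp1, hp2, w, x, hw0, hw1, rfl⟩
    rw [hCm]
    constructor
    · exact discrete_prob w hw0 hw1 x
    · intro k
      rw [discrete_integral w hw0 x (fun r => ((r : ℝ)) ^ (i k - 2)), hmom k]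
      exact hcons k
  constructor
  · apply le_antisymm
    · exact le_iInf₂ fun ν hν => iInf₂_le ν (hCDsub hν)
    · refine le_iInf₂ fun ν hν => ?_
      by_contra hcon
      push_neg at hcon
      obtain ⟨t, ht1, ht2⟩ := EReal.exists_between_coe_real hcon
      obtain ⟨μ, hμCD, hμlt⟩ := key q hq hbd ν hν t ht1
      have : (⨅ ν ∈ CD, eIntegral q ν) ≤ eIntegral q μ := iInf₂_le μ hμCD
      exact absurd (lt_of_le_of_lt this hμlt) (not_lt_of_ge ht2.le)
  · apply le_antisymm
    · refine iSup₂_le fun ν hν => ?_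
      by_contra hcon
      push_neg at hcon
      obtain ⟨t, ht1, ht2⟩ := EReal.exists_between_coe_real hcon
      have hν' := hν
      rw [hCm] at hν'
      have hprob := hν'.1
      have hbd' : (∃ b, ∀ x, b ≤ -(q x)) ∨ (∃ b, ∀ x, -(q x) ≤ b) := by
        rcases hbd with ⟨b, hb⟩ | ⟨b, hb⟩
        · exact Or.inr ⟨-b, fun x => by linarith [hb x]⟩
        · exact Or.inl ⟨-b, fun x => by linarith [hb x]⟩
      have hflip : eIntegral (fun y => -(q y)) ν = - eIntegral q ν :=
        eIntegral_neg q hbd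
      have hlt' : eIntegral (fun y => -(q y)) ν < ((-t : ℝ) : EReal) := by
        rw [hflip, EReal.coe_neg]
        exact EReal.neg_lt_neg_iff.mpr ht2
      obtain ⟨μ, hμCD, hμlt⟩ := key (fun y => -(q y)) hq.neg hbd' ν hν (-t) hlt'
      have hμCm := hCDsub hμCD
      have hμprob : IsProbabilityMeasure μ := by
        rw [hCm] at hμCm
        exact hμCm.1
      have hflipμ : eIntegral (fun y => -(q y)) μ = - eIntegral q μ :=
        eIntegral_neg q hbd
      rw [hflipμ, EReal.coe_neg, EReal.neg_lt_neg_iff] at hμlt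
      have : eIntegral q μ ≤ ⨆ ν ∈ CD, eIntegral q ν := le_iSup₂ (f := fun ν _ => eIntegral q ν) μ hμCD
      exact absurd (lt_of_lt_of_le hμlt this) (not_lt_of_ge ht1.le)
    · exact iSup₂_le fun ν hν => le_iSup₂ (f := fun ν _ => eIntegral q ν) ν (hCDsub hν)
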